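/- Let H := L²(V, ℂ) where the real symplectic vector space (V, ω) is endowed with the counting measure, and define for each φ ∈ V the operator w(φ) on H by (w(φ)F)(ψ) := e^{iω(φ,ψ)/2} F(φ+ψ). Then each w(φ) is a well-defined bounded (indeed unitary) operator on H and the map w satisfies the Weyl relations w(0) = 1, w(-φ) = w(φ)*, and w(φ+ψ) = e^{iω(φ,ψ)/2} w(φ) w(ψ). -/

import Mathlib

open Complex ENNReal

namespace WeylAux

variable {V : Type*} [AddCommGroup V] [Module ℝ V]

noncomputable def c (ω : V →ₗ[ℝ] V →ₗ[ℝ] ℝ) (φ ψ : V) : ℂ :=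
  Complex.exp (Complex.I * (ω φ ψ : ℂ) / 2)

lemma norm_c (ω : V →ₗ[ℝ] V →ₗ[ℝ] ℝ) (φ ψ : V) : ‖c ω φ ψ‖ = 1 := by
  have h : Complex.I * ((ω φ ψ : ℝ) : ℂ) / 2 = ((ω φ ψ / 2 : ℝ) : ℂ) * Complex.I := by
    push_cast; ring
  rw [c, h, Complex.norm_exp_ofReal_mul_I]

lemma memℓp_shift (ω : V →ₗ[ℝ] V →ₗ[ℝ] ℝ) (φ : V) (F : lp (fun _ : V => ℂ) 2) :
    Memℓp (fun ψ => c ω φ ψ * (F : ∀ _ : V, ℂ) (φ + ψ)) 2 := by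
  apply memℓp_gen
  have h : Summable (fun ψ : V => ‖(F : ∀ _ : V, ℂ) ψ‖ ^ (2 : ℝ≥0∞).toReal) := by
    have := lp.memℓp F
    rwa [memℓp_gen_iff (by norm_num)] at this
  have h2 : Summable ((fun ψ : V => ‖(F : ∀ _ : V, ℂ) ψ‖ ^ (2 : ℝ≥0∞).toReal) ∘
      (Equiv.addLeft φ)) := (Equiv.addLeft φ).summable_iff.2 h
  convert h2 using 2 with ψ
  rw [norm_mul, norm_c, one_mul]; simp [Function.comp, Equiv.coe_addLeft]

noncomputable def Wraw (ω : V →ₗ[ℝ] V →ₗ[ℝ] ℝ) (φ : V) :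
    lp (fun _ : V => ℂ) 2 →ₗ[ℂ] lp (fun _ : V => ℂ) 2 where
  toFun F := ⟨fun ψ => c ω φ ψ * (F : ∀ _ : V, ℂ) (φ + ψ), memℓp_shift ω φ F⟩
  map_add' F G := by
    apply lp.ext; funext ψ
    simp only [lp.coeFn_add, Pi.add_apply]
    show c ω φ ψ * _ = c ω φ ψ * _ + c ω φ ψ * _
    simp [lp.coeFn_add, mul_add]
  map_smul' a F := by
    apply lp.ext; funext ψ
    show c ω φ ψ * _ = (a • _ : lp (fun _ : V => ℂ) 2) ψ
    simp [lp.coeFn_smul, Pi.smul_apply, smul_eq_mul]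
    ring

lemma norm_Wraw (ω : V →ₗ[ℝ] V →ₗ[ℝ] ℝ) (φ : V) (F : lp (fun _ : V => ℂ) 2) :
    ‖Wraw ω φ F‖ = ‖F‖ := by
  have hp : (0:ℝ) < (2 : ℝ≥0∞).toReal := by norm_num
  rw [lp.norm_eq_tsum_rpow hp, lp.norm_eq_tsum_rpow hp]
  congr 1
  have := (Equiv.addLeft φ).tsum_eq (fun ψ : V => ‖(F : ∀ _ : V, ℂ) ψ‖ ^ (2 : ℝ≥0∞).toReal)
  rw [← this]
  congr 1; funext ψ
  show (‖c ω φ ψ * (F : ∀ _ : V, ℂ) (φ + ψ)‖) ^ _ = _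
  rw [norm_mul, norm_c, one_mul]; simp [Function.comp, Equiv.coe_addLeft]

noncomputable def W (ω : V →ₗ[ℝ] V →ₗ[ℝ] ℝ) (φ : V) :
    lp (fun _ : V => ℂ) 2 →L[ℂ] lp (fun _ : V => ℂ) 2 :=
  LinearMap.mkContinuous (Wraw ω φ) 1 (fun F => by rw [norm_Wraw]; simp)

lemma W_apply (ω : V →ₗ[ℝ] V →ₗ[ℝ] ℝ) (φ : V) (F : lp (fun _ : V => ℂ) 2) (ψ : V) :
    (W ω φ F : ∀ _ : V, ℂ) ψ = c ω φ ψ * (F : ∀ _ : V, ℂ) (φ + ψ) := rfl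

end WeylAux

theorem stmt_4 {V : Type*} [AddCommGroup V] [Module ℝ V]
    (ω : V →ₗ[ℝ] V →ₗ[ℝ] ℝ) (hskew : ∀ φ ψ : V, ω φ ψ = - ω ψ φ) :
    ∃ W : V → (lp (fun _ : V => ℂ) 2 →L[ℂ] lp (fun _ : V => ℂ) 2),
      (∀ (φ : V) (F : lp (fun _ : V => ℂ) 2) (ψ : V),
        (W φ F : ∀ _ : V, ℂ) ψ = Complex.exp (Complex.I * (ω φ ψ : ℂ) / 2) * (F : ∀ _ : V, ℂ) (φ + ψ)) ∧
      (∀ φ : V, W φ ∘L ContinuousLinearMap.adjoint (W φ) = 1 ∧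
        ContinuousLinearMap.adjoint (W φ) ∘L W φ = 1) ∧
      W 0 = 1 ∧
      (∀ φ : V, W (-φ) = ContinuousLinearMap.adjoint (W φ)) ∧
      (∀ φ ψ : V, W (φ + ψ) =
        Complex.exp (Complex.I * (ω φ ψ : ℂ) / 2) • (W φ ∘L W ψ)) := by
  have hself : ∀ φ : V, ω φ φ = 0 := fun φ => by have := hskew φ φ; linarith
  have hW0 : WeylAux.W ω 0 = 1 := ?hW0
  have hadj : ∀ φ : V, WeylAux.W ω (-φ) = ContinuousLinearMap.adjoint (WeylAux.W ω φ) := ?hadj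
  have hcomp : ∀ φ ψ : V, WeylAux.W ω (φ + ψ) =
      Complex.exp (Complex.I * (ω φ ψ : ℂ) / 2) • (WeylAux.W ω φ ∘L WeylAux.W ω ψ) := ?hcomp
  case _ =>
    refine ⟨WeylAux.W ω, fun φ F ψ => rfl, ?_, hW0, hadj, hcomp⟩
    intro φ
    have key : ∀ φ ψ : V, ω φ ψ = 0 → WeylAux.W ω φ ∘L WeylAux.W ω ψ = WeylAux.W ω (φ + ψ) := by
      intro φ ψ h
      rw [hcomp φ ψ, h]
      norm_num
    constructor
    · rw [← hadj, key φ (-φ) (by simp [map_neg, hself φ]), add_neg_cancel, hW0]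
    · rw [← hadj, key (-φ) φ (by simp [map_neg, hself φ]), neg_add_cancel, hW0]
  case hW0 =>
    ext F ψ
    show WeylAux.c ω 0 ψ * (F : ∀ _ : V, ℂ) (0 + ψ) = _
    simp [WeylAux.c]
  case hadj =>
    intro φ
    rw [ContinuousLinearMap.eq_adjoint_iff]
    intro F G
    rw [lp.inner_eq_tsum, lp.inner_eq_tsum]
    rw [← (Equiv.addLeft φ).tsum_eq
      (fun ψ : V => (inner ℂ ((WeylAux.W ω (-φ) F : ∀ _ : V, ℂ) ψ) ((G : ∀ _ : V, ℂ) ψ) : ℂ))]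
    congr 1; funext χ
    show (inner ℂ ((WeylAux.W ω (-φ) F : ∀ _ : V, ℂ) (φ + χ)) ((G : ∀ _ : V, ℂ) (φ + χ)) : ℂ)
      = inner ℂ ((F : ∀ _ : V, ℂ) χ) ((WeylAux.W ω φ G : ∀ _ : V, ℂ) χ)
    rw [WeylAux.W_apply, WeylAux.W_apply, RCLike.inner_apply, RCLike.inner_apply]
    have harg : -φ + (φ + χ) = χ := by abel
    rw [harg]
    have hc : (starRingEnd ℂ) (WeylAux.c ω (-φ) (φ + χ)) = WeylAux.c ω φ χ := by
      rw [WeylAux.c, WeylAux.c, ← Complex.exp_conj]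
      congr 1
      simp only [map_div₀, map_mul, Complex.conj_I, Complex.conj_ofReal, map_ofNat]
      have : ω (-φ) (φ + χ) = - ω φ χ := by
        simp [map_add, map_neg, hself φ]
      rw [this]; push_cast; ring
    rw [map_mul, hc]; ring
  case hcomp =>
    intro φ ψ
    ext F χ
    show WeylAux.c ω (φ + ψ) χ * (F : ∀ _ : V, ℂ) (φ + ψ + χ) = _
    have hrhs : ((Complex.exp (Complex.I * (ω φ ψ : ℂ) / 2) •
        (WeylAux.W ω φ ∘L WeylAux.W ω ψ)) F : ∀ _ : V, ℂ) χ
        = Complex.exp (Complex.I * (ω φ ψ : ℂ) / 2) *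
          (WeylAux.c ω φ χ * (WeylAux.c ω ψ (φ + χ) * (F : ∀ _ : V, ℂ) (ψ + (φ + χ)))) := by
      rw [ContinuousLinearMap.smul_apply, lp.coeFn_smul, Pi.smul_apply, smul_eq_mul]
      rfl
    rw [hrhs]
    have harg : ψ + (φ + χ) = φ + ψ + χ := by abel
    rw [harg, WeylAux.c, WeylAux.c, WeylAux.c]
    rw [← mul_assoc, ← mul_assoc, ← Complex.exp_add, ← Complex.exp_add]
    congr 2
    have h1 : ω (φ + ψ) χ = ω φ χ + ω ψ χ := by simp [map_add]
    have h2 : ω ψ (φ + χ) = ω ψ φ + ω ψ χ := by simp [map_add]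
    have h3 : ω ψ φ = - ω φ ψ := hskew ψ φ
    rw [h1, h2, h3]; push_cast; ring
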